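/- For every b > 0 and p ≥ 1 there exist constants C' > 0 and B' > 0 such that for all r ≥ 0, ∑_{k=0}^∞ b^k · r^k / Γ(k/p + 1/2) ≤ C' · exp(B' · r^p). -/

import Mathlib

open Real MeasureTheory Set

private lemma gamma_mono' {x y : ℝ} (hx : 2 ≤ x) (hxy : x ≤ y) :
    Real.Gamma x ≤ Real.Gamma y :=
  Real.Gamma_strictMonoOn_Ici.monotoneOn hx (hx.trans hxy) hxy

private lemma gamma_lb' {x : ℝ} (hx : 0 < x) (hx2 : x ≤ 2) : 1 / 6 ≤ Real.Gamma x := by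
  have h1 : Real.Gamma (x + 2) = (x + 1) * (x * Real.Gamma x) := by
    rw [show x + 2 = (x + 1) + 1 by ring, Real.Gamma_add_one (by positivity),
      Real.Gamma_add_one hx.ne']
  have h2 : (1 : ℝ) ≤ Real.Gamma (x + 2) := by
    have hG2 : Real.Gamma 2 = 1 := by
      rw [show (2:ℝ) = (1:ℕ) + 1 by norm_num, Real.Gamma_nat_eq_factorial]
      norm_num
    have := gamma_mono' (le_refl (2:ℝ)) (by linarith : (2:ℝ) ≤ x + 2)
    rwa [hG2] at this
  have hGpos : 0 < Real.Gamma x := Real.Gamma_pos_of_pos hx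
  have h3 : (x + 1) * (x * Real.Gamma x) ≤ 6 * Real.Gamma x := by
    nlinarith [mul_nonneg (mul_nonneg (by linarith : (0:ℝ) ≤ 2 - x)
      (by linarith : (0:ℝ) ≤ x + 3)) hGpos.le]
  linarith [h1 ▸ h2]

private lemma gamma_ub' {t : ℝ} (ht : 0 ≤ t) (ht1 : t ≤ 1) : Real.Gamma (t + 1) ≤ 3 := by
  have h1 : Real.Gamma (t + 3) = (t + 2) * ((t + 1) * Real.Gamma (t + 1)) := by
    rw [show t + 3 = (t + 2) + 1 by ring, Real.Gamma_add_one (by positivity),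
      show t + 2 = (t + 1) + 1 by ring, Real.Gamma_add_one (by positivity)]
  have h2 : Real.Gamma (t + 3) ≤ 6 := by
    have hG4 : Real.Gamma 4 = 6 := by
      rw [show (4:ℝ) = (3:ℕ) + 1 by norm_num, Real.Gamma_nat_eq_factorial]
      norm_num [Nat.factorial]
    have := gamma_mono' (by linarith : (2:ℝ) ≤ t + 3) (by linarith : t + 3 ≤ 4)
    rw [hG4] at this
    linarith
  have hGpos : 0 < Real.Gamma (t + 1) := Real.Gamma_pos_of_pos (by linarith)
  have h3 : 2 * Real.Gamma (t + 1) ≤ (t + 2) * ((t + 1) * Real.Gamma (t + 1)) := by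
    nlinarith [mul_nonneg (mul_nonneg ht (by linarith : (0:ℝ) ≤ t + 3)) hGpos.le]
  linarith [h1 ▸ h2]

/-- Pointwise bound `u ^ t ≤ e^(u+1) Γ(t+1)` for `u, t ≥ 0`. -/
private lemma rpow_le_exp_mul_gamma {u t : ℝ} (hu : 0 ≤ u) (ht : 0 ≤ t) :
    u ^ t ≤ Real.exp (u + 1) * Real.Gamma (t + 1) := by
  rcases eq_or_lt_of_le hu with rfl | hu'
  · rcases eq_or_lt_of_le ht with rfl | ht'
    · simp only [Real.rpow_zero, zero_add, Real.Gamma_one, mul_one]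
      exact Real.one_le_exp (by norm_num)
    · rw [Real.zero_rpow ht'.ne']
      positivity
  · have hint : IntegrableOn (fun x : ℝ => Real.exp (-x) * x ^ t) (Ioi 0) := by
      have := Real.GammaIntegral_convergent (show (0:ℝ) < t + 1 by linarith)
      simpa using this
    have hGamma : Real.Gamma (t + 1) = ∫ x in Ioi 0, Real.exp (-x) * x ^ t := by
      rw [Real.Gamma_eq_integral (by linarith : (0:ℝ) < t + 1)]
      simp
    have hsub : Ioc u (u + 1) ⊆ Ioi 0 := fun x hx => lt_of_le_of_lt hu hx.1
    have h1 : ∫ _x in Ioc u (u + 1), Real.exp (-(u + 1)) * u ^ t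
        ≤ ∫ x in Ioc u (u + 1), Real.exp (-x) * x ^ t := by
      apply setIntegral_mono_on
      · exact integrableOn_const (by rw [Real.volume_Ioc]; exact ENNReal.ofReal_ne_top)
      · exact hint.mono_set hsub
      · exact measurableSet_Ioc
      · intro x hx
        have hx1 : u < x := hx.1
        have hx2 : x ≤ u + 1 := hx.2
        apply mul_le_mul (Real.exp_le_exp.mpr (by linarith))
          (Real.rpow_le_rpow hu hx1.le ht) (Real.rpow_nonneg hu t) (Real.exp_pos _).le
    have h2 : ∫ x in Ioc u (u + 1), Real.exp (-x) * x ^ t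
        ≤ ∫ x in Ioi 0, Real.exp (-x) * x ^ t := by
      apply setIntegral_mono_set hint
      · filter_upwards [ae_restrict_mem measurableSet_Ioi] with x hx
        have : (0:ℝ) < x := hx
        positivity
      · exact HasSubset.Subset.eventuallyLE hsub
    have h3 : ∫ _x in Ioc u (u + 1), Real.exp (-(u + 1)) * u ^ t
        = Real.exp (-(u + 1)) * u ^ t := by
      rw [setIntegral_const, Real.volume_real_Ioc, smul_eq_mul]
      norm_num
    have h4 : Real.exp (-(u + 1)) * u ^ t ≤ Real.Gamma (t + 1) := by
      rw [hGamma]; rw [h3] at h1; exact h1.trans h2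
    calc u ^ t = Real.exp (u + 1) * (Real.exp (-(u + 1)) * u ^ t) := by
          rw [← mul_assoc, ← Real.exp_add, add_neg_cancel, Real.exp_zero, one_mul]
      _ ≤ Real.exp (u + 1) * Real.Gamma (t + 1) :=
          mul_le_mul_of_nonneg_left h4 (Real.exp_pos _).le

private lemma gamma_succ_le' {t : ℝ} (ht : 0 ≤ t) :
    Real.Gamma (t + 1) ≤ 53 * ((t + 1 / 2) * Real.Gamma (t + 1 / 2)) := by
  have hpos : 0 < Real.Gamma (t + 1 / 2) := Real.Gamma_pos_of_pos (by linarith)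
  rcases le_or_gt 1 t with h | h
  · have h1 : Real.Gamma (t + 1) ≤ Real.Gamma (t + 3 / 2) :=
      gamma_mono' (by linarith) (by linarith)
    have h2 : Real.Gamma (t + 3 / 2) = (t + 1 / 2) * Real.Gamma (t + 1 / 2) := by
      rw [show t + 3 / 2 = (t + 1 / 2) + 1 by ring, Real.Gamma_add_one (by positivity)]
    nlinarith
  · have h1 : Real.Gamma (t + 1) ≤ 3 := gamma_ub' ht h.le
    have h2 : 1 / 6 ≤ Real.Gamma (t + 1 / 2) := gamma_lb' (by linarith) (by linarith)
    nlinarith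

/-- Growth estimate for the Mittag-Leffler type series `∑ b^k r^k / Γ(k/p + 1/2)`. -/
theorem mittag_leffler_growth (b p : ℝ) (hb : 0 < b) (hp : 1 ≤ p) :
    ∃ C' > 0, ∃ B' > 0, ∀ r : ℝ, 0 ≤ r →
      ∑' k : ℕ, b ^ k * r ^ k / Real.Gamma ((k : ℝ) / p + 1 / 2)
        ≤ C' * Real.exp (B' * r ^ p) := by
  have hp0 : 0 < p := lt_of_lt_of_le one_pos hp
  refine ⟨424 / 3 * Real.exp 1, by positivity, (8 * b) ^ p, by positivity, fun r hr => ?_⟩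
  set u : ℝ := (8 * b) ^ p * r ^ p with hu
  have hu0 : 0 ≤ u := by positivity
  set c : ℝ := 106 * Real.exp 1 * Real.exp u with hc
  have hc0 : 0 < c := by positivity
  have hg : ∀ k : ℕ, b ^ k * r ^ k / Real.Gamma ((k : ℝ) / p + 1 / 2)
      ≤ c * (1 / 4 : ℝ) ^ k := by
    intro k
    have htpos : (0:ℝ) < (k : ℝ) / p + 1 / 2 := by positivity
    have hΓpos : 0 < Real.Gamma ((k : ℝ) / p + 1 / 2) := Real.Gamma_pos_of_pos htpos
    set G : ℝ := Real.Gamma ((k : ℝ) / p + 1 / 2) with hG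
    set t : ℝ := (k : ℝ) / p with htdef
    rw [div_le_iff₀ hΓpos]
    -- key chain
    have key : ((8 * b * r) ^ k : ℝ) ≤ Real.exp (u + 1) * Real.Gamma (t + 1) := by
      have h1 : ((8 * b * r) : ℝ) ^ k = ((8 * b * r) ^ p) ^ ((k : ℝ) / p) := by
        rw [← Real.rpow_natCast (8 * b * r) k, ← Real.rpow_mul (by positivity)]
        congr 1
        field_simp
      have h2 : ((8 * b * r) : ℝ) ^ p = u := by
        rw [hu, ← Real.mul_rpow (by positivity) hr]
      rw [h1, h2]
      exact rpow_le_exp_mul_gamma hu0 (by positivity)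
    have ht0 : 0 ≤ t := by positivity
    have hstep : Real.Gamma (t + 1) ≤ 53 * ((t + 1 / 2) * G) := gamma_succ_le' ht0
    have htk : t + 1 / 2 ≤ 2 * 2 ^ k := by
      have h1 : t ≤ (k : ℝ) := by
        rw [htdef, div_le_iff₀ hp0]
        nlinarith [Nat.cast_nonneg (α := ℝ) k]
      have h2 : (k : ℝ) < 2 ^ k := by exact_mod_cast (Nat.lt_two_pow_self (n := k))
      have h3 : (1:ℝ) ≤ 2 ^ k := one_le_pow₀ (by norm_num)
      linarith
    have key2 : ((8 * b * r) ^ k : ℝ) ≤ Real.exp (u + 1) * (53 * ((2 * 2 ^ k) * G)) := by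
      refine key.trans ?_
      have : Real.Gamma (t + 1) ≤ 53 * ((2 * 2 ^ k) * G) := by
        refine hstep.trans ?_
        have := mul_le_mul_of_nonneg_right htk hΓpos.le
        nlinarith
      exact mul_le_mul_of_nonneg_left this (Real.exp_pos _).le
    have h8 : (0:ℝ) < 8 ^ k := by positivity
    have hbr : b ^ k * r ^ k = (8 * b * r) ^ k / 8 ^ k := by
      rw [mul_pow, mul_pow]
      field_simp
    rw [hbr, div_le_iff₀ h8]
    refine key2.trans (le_of_eq ?_)
    have hpow : ((1 / 4 : ℝ)) ^ k * 8 ^ k = 2 ^ k := by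
      rw [← mul_pow]; norm_num
    have hexp : Real.exp (u + 1) = Real.exp u * Real.exp 1 := by
      rw [← Real.exp_add]
    rw [hexp, hc, ← hpow]
    ring
  have hgs : Summable (fun k : ℕ => c * (1 / 4 : ℝ) ^ k) :=
    (summable_geometric_of_lt_one (by norm_num) (by norm_num)).mul_left c
  have hfnn : ∀ k : ℕ, 0 ≤ b ^ k * r ^ k / Real.Gamma ((k : ℝ) / p + 1 / 2) := by
    intro k
    have : (0:ℝ) < (k : ℝ) / p + 1 / 2 := by positivity
    exact div_nonneg (by positivity) (Real.Gamma_pos_of_pos this).le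
  have hfs : Summable (fun k : ℕ => b ^ k * r ^ k / Real.Gamma ((k : ℝ) / p + 1 / 2)) :=
    Summable.of_nonneg_of_le hfnn hg hgs
  calc ∑' k : ℕ, b ^ k * r ^ k / Real.Gamma ((k : ℝ) / p + 1 / 2)
      ≤ ∑' k : ℕ, c * (1 / 4 : ℝ) ^ k := Summable.tsum_le_tsum hg hfs hgs
    _ = c * (4 / 3) := by
        rw [tsum_mul_left, tsum_geometric_of_lt_one (by norm_num) (by norm_num)]
        norm_num
    _ = 424 / 3 * Real.exp 1 * Real.exp ((8 * b) ^ p * r ^ p) := by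
        rw [hc, hu]; ring
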